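/- Let Φ be an N-function that is C² on (0,∞) and uniformly convex with constants 0 < c ≤ C. Then the shifted N-functions are uniformly convex, uniformly in the shift: there exist constants 0 < c' ≤ C', depending only on c and C, such that for all a ≥ 0 and all t > 0: c' Φ_a'(t) ≤ t Φ_a''(t) ≤ C' Φ_a'(t), where Φ_a'(t) = (t/(a+t)) Φ'(a+t) and Φ_a'' is its derivative in t. -/

import Mathlib

open MeasureTheory

/-- An N-function `Φ` with derivative `Φ'`: differentiable on `[0,∞)` with
`Φ(0) = 0`, `Φ(t) = ∫₀ᵗ Φ'(s) ds`, `Φ'` nondecreasing, right-continuous,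
`Φ'(0) = 0` and `Φ'(t) > 0` for `t > 0`. -/
structure IsNFunction (Φ Φ' : ℝ → ℝ) : Prop where
  map_zero : Φ 0 = 0
  eq_integral : ∀ t : ℝ, 0 ≤ t → Φ t = ∫ s in (0:ℝ)..t, Φ' s
  deriv_zero : Φ' 0 = 0
  deriv_pos : ∀ t : ℝ, 0 < t → 0 < Φ' t
  deriv_mono : MonotoneOn Φ' (Set.Ici 0)
  deriv_rightCont : ∀ t : ℝ, 0 ≤ t → ContinuousWithinAt Φ' (Set.Ici t) t

/-- The Δ₂-condition with constant `D`. -/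
def Delta2 (Φ : ℝ → ℝ) (D : ℝ) : Prop := ∀ t : ℝ, 0 < t → Φ (2 * t) ≤ D * Φ t

/-- Uniform convexity with constants `c ≤ C`: `c Φ'(t) ≤ t Φ''(t) ≤ C Φ'(t)` for `t > 0`. -/
def UniformlyConvex (Φ' Φ'' : ℝ → ℝ) (c C : ℝ) : Prop :=
  ∀ t : ℝ, 0 < t → c * Φ' t ≤ t * Φ'' t ∧ t * Φ'' t ≤ C * Φ' t

/-- Derivative of the shifted N-function: `Φ_a'(t) = (t/(a+t)) Φ'(a+t)`. -/
noncomputable def shiftDeriv (Φ' : ℝ → ℝ) (a t : ℝ) : ℝ := t / (a + t) * Φ' (a + t)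

/-- The shifted N-function `Φ_a(t) = ∫₀ᵗ (s/(a+s)) Φ'(a+s) ds`. -/
noncomputable def shiftN (Φ' : ℝ → ℝ) (a t : ℝ) : ℝ := ∫ s in (0:ℝ)..t, shiftDeriv Φ' a s

/-- the shifted N-functions of a uniformly convex N-function are
uniformly convex, uniformly in the shift: `c' Φ_a'(t) ≤ t Φ_a''(t) ≤ C' Φ_a'(t)` for
all `a ≥ 0`, `t > 0`, with `c', C'` depending only on `c, C`. -/
theorem statement17 (c C : ℝ) (hc : 0 < c) (hcC : c ≤ C) :
    ∃ c' C' : ℝ, 0 < c' ∧ c' ≤ C' ∧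
      ∀ (Φ Φ' Φ'' : ℝ → ℝ),
        IsNFunction Φ Φ' →
        ContDiffOn ℝ 2 Φ (Set.Ioi 0) →
        (∀ t : ℝ, 0 < t → HasDerivAt Φ (Φ' t) t) →
        (∀ t : ℝ, 0 < t → HasDerivAt Φ' (Φ'' t) t) →
        UniformlyConvex Φ' Φ'' c C →
        ∀ a : ℝ, 0 ≤ a →
          ∃ sd'' : ℝ → ℝ,
            (∀ t : ℝ, 0 < t → HasDerivAt (shiftDeriv Φ' a) (sd'' t) t) ∧
            ∀ t : ℝ, 0 < t →
              c' * shiftDeriv Φ' a t ≤ t * sd'' t ∧ t * sd'' t ≤ C' * shiftDeriv Φ' a t := by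
   
  refine ⟨min c 1, max C 1, lt_min hc one_pos,
    le_trans (min_le_left _ _) (le_trans hcC (le_max_left _ _)), ?_⟩
  intro Φ Φ' Φ'' hN _ _ hd2 huc a ha
  refine ⟨fun t => a / (a + t) ^ 2 * Φ' (a + t) + t / (a + t) * Φ'' (a + t), ?_, ?_⟩
  · intro t ht
    have hs : 0 < a + t := by linarith
    have h1 : HasDerivAt (fun t : ℝ => t / (a + t)) (a / (a + t) ^ 2) t := by
      have := (hasDerivAt_id t).div ((hasDerivAt_id t).const_add a) hs.ne'
      rw [show a / (a + t) ^ 2 = (1 * (a + id t) - id t * 1) / (a + id t) ^ 2 by simp only [id]; ring]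
      exact this
    have h2 : HasDerivAt (fun t : ℝ => Φ' (a + t)) (Φ'' (a + t)) t := by
      have := (hd2 (a + t) hs).comp t ((hasDerivAt_id t).const_add a)
      rw [mul_one] at this; exact this
    have := h1.mul h2
    exact this
  · intro t ht
    have hs : 0 < a + t := by linarith
    have hs2 : (0:ℝ) < (a + t) ^ 2 := by positivity
    have hP : 0 < Φ' (a + t) := hN.deriv_pos _ hs
    obtain ⟨hl, hu⟩ := huc (a + t) hs
    set P := Φ' (a + t) with hPdef
    set Q := Φ'' (a + t) with hQdef
    have hc1 : min c 1 ≤ c := min_le_left _ _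
    have hc2 : min c 1 ≤ 1 := min_le_right _ _
    have hC1 : C ≤ max C 1 := le_max_left _ _
    have hC2 : (1:ℝ) ≤ max C 1 := le_max_right _ _
    have e1 : min c 1 * (t * a * P) ≤ 1 * (t * a * P) :=
      mul_le_mul_of_nonneg_right hc2 (by positivity)
    have e2 : min c 1 * (t ^ 2 * P) ≤ c * (t ^ 2 * P) :=
      mul_le_mul_of_nonneg_right hc1 (by positivity)
    have e3 : t ^ 2 * (c * P) ≤ t ^ 2 * ((a + t) * Q) :=
      mul_le_mul_of_nonneg_left hl (sq_nonneg t)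
    have e4 : t ^ 2 * ((a + t) * Q) ≤ t ^ 2 * (C * P) :=
      mul_le_mul_of_nonneg_left hu (sq_nonneg t)
    have e5 : C * (t ^ 2 * P) ≤ max C 1 * (t ^ 2 * P) :=
      mul_le_mul_of_nonneg_right hC1 (by positivity)
    have e6 : 1 * (t * a * P) ≤ max C 1 * (t * a * P) :=
      mul_le_mul_of_nonneg_right hC2 (by positivity)
    have keyl : min c 1 * (t * (a + t)) * P ≤ t * a * P + t ^ 2 * ((a + t) * Q) := by
      nlinarith [e1, e2, e3]
    have keyu : t * a * P + t ^ 2 * ((a + t) * Q) ≤ max C 1 * (t * (a + t)) * P := by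
      nlinarith [e4, e5, e6]
    constructor
    · calc min c 1 * shiftDeriv Φ' a t
          = min c 1 * (t * (a + t)) * P / (a + t) ^ 2 := by
            simp only [shiftDeriv, ← hPdef]; field_simp
        _ ≤ (t * a * P + t ^ 2 * ((a + t) * Q)) / (a + t) ^ 2 := by gcongr
        _ = t * (a / (a + t) ^ 2 * P + t / (a + t) * Q) := by field_simp
    · calc t * (a / (a + t) ^ 2 * P + t / (a + t) * Q)
          = (t * a * P + t ^ 2 * ((a + t) * Q)) / (a + t) ^ 2 := by field_simp
        _ ≤ max C 1 * (t * (a + t)) * P / (a + t) ^ 2 := by gcongr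
        _ = max C 1 * shiftDeriv Φ' a t := by
            simp only [shiftDeriv, ← hPdef]; field_simp
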